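/- Let G, H, Γ be finite groups with a given action of Γ on H by automorphisms. There is a bijection between the set of surjective group homomorphisms ψ : G → H⋊Γ and the set of quadruples (ρ, N, s, φ) where: ρ : G → Γ is a surjective homomorphism; N is a normal subgroup of G contained in ker ρ; s : Γ → G/N is a group homomorphism with ρ̄ ∘ s = id_Γ, where ρ̄ : G/N → Γ is the map induced by ρ; and φ : (ker ρ)/N → H is a Γ-equivariant group isomorphism, where Γ acts on (ker ρ)/N by γ·x = s(γ)·x·s(γ)⁻¹. The bijection sends ψ to (ρ, N, s, φ) where ρ is the composition of ψ with the projection H⋊Γ → Γ, N = ker ψ, s = ψ̄⁻¹ restricted to Γ ⊆ H⋊Γ (ψ̄ : G/N ≅ H⋊Γ being the isomorphism induced by ψ), and φ is the restriction of ψ̄ to (ker ρ)/N followed by the identification of ker(H⋊Γ → Γ) with H. -/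

import Mathlib

open SemidirectProduct

/-- The data of a quadruple `(ρ, N, s, φiso)` attached to a fixed normal subgroup
`N ≤ G`: a surjection `ρ : G → Γ` with `N ≤ ker ρ`, a homomorphic section
`s : Γ → G/N` of the map `G/N → Γ` induced by `ρ`, and a Γ-equivariant
isomorphism `φiso : (ker ρ)/N ≅ H` (where `(ker ρ)/N` is viewed inside `G/N`
and `Γ` acts on it by conjugation through `s`). -/
structure SurjQuad (G H Γ : Type*) [Group G] [Group H] [Group Γ]
    (φ : Γ →* MulAut H) (N : Subgroup G) [N.Normal] where
  /-- the surjection onto `Γ` -/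
  ρ : G →* Γ
  ρ_surj : Function.Surjective ρ
  N_le : N ≤ ρ.ker
  /-- a homomorphic section `Γ → G/N` -/
  s : Γ →* G ⧸ N
  /-- `s` is a section of the map `G/N → Γ` induced by `ρ` -/
  s_sec : ∀ (γ : Γ) (g : G), (QuotientGroup.mk g : G ⧸ N) = s γ → ρ g = γ
  /-- a Γ-equivariant isomorphism `(ker ρ)/N ≅ H`, where `(ker ρ)/N` is the image
  of `ker ρ` in `G/N` -/
  φiso : (ρ.ker.map (QuotientGroup.mk' N)) ≃* H
  /-- Γ-equivariance of `φiso`, where `γ` acts on `(ker ρ)/N` by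
  `x ↦ s(γ)·x·s(γ)⁻¹` -/
  φiso_equiv : ∀ (γ : Γ) (x : ρ.ker.map (QuotientGroup.mk' N))
      (h : s γ * (x : G ⧸ N) * (s γ)⁻¹ ∈ ρ.ker.map (QuotientGroup.mk' N)),
      φiso ⟨s γ * (x : G ⧸ N) * (s γ)⁻¹, h⟩ = φ γ (φiso x)

namespace SQAux

variable {G H Γ : Type*} [Group G] [Group H] [Group Γ] (φ : Γ →* MulAut H)
variable {N : Subgroup G} [hN : N.Normal]

abbrev S (q : SurjQuad G H Γ φ N) : Subgroup (G ⧸ N) := q.ρ.ker.map (QuotientGroup.mk' N)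

instance (q : SurjQuad G H Γ φ N) : (S φ q).Normal :=
  Subgroup.Normal.map inferInstance _ (QuotientGroup.mk'_surjective N)

lemma mem_S (q : SurjQuad G H Γ φ N) (g : G) :
    (QuotientGroup.mk g : G ⧸ N) * (q.s (q.ρ g))⁻¹ ∈ S φ q := by
  obtain ⟨g', hg'⟩ := QuotientGroup.mk'_surjective N (q.s (q.ρ g))
  have hρ : q.ρ g' = q.ρ g := q.s_sec _ _ hg'
  refine Subgroup.mem_map.2 ⟨g * g'⁻¹, ?_, ?_⟩
  · simp [MonoidHom.mem_ker, hρ]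
  · rw [← hg']
    simp

/-- from a quadruple, build the surjection `G → H ⋊ Γ`. -/
def Bfun (q : SurjQuad G H Γ φ N) : G →* H ⋊[φ] Γ where
  toFun g := ⟨q.φiso ⟨QuotientGroup.mk g * (q.s (q.ρ g))⁻¹, mem_S φ q g⟩, q.ρ g⟩
  map_one' := by
    have h1 : (⟨QuotientGroup.mk 1 * (q.s (q.ρ 1))⁻¹, mem_S φ q 1⟩ : S φ q) = 1 :=
      Subtype.ext (by simp)
    apply SemidirectProduct.ext <;> simp [h1]
  map_mul' g₁ g₂ := by
    set x₁ : S φ q := ⟨QuotientGroup.mk g₁ * (q.s (q.ρ g₁))⁻¹, mem_S φ q g₁⟩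
    set x₂ : S φ q := ⟨QuotientGroup.mk g₂ * (q.s (q.ρ g₂))⁻¹, mem_S φ q g₂⟩
    have hc : q.s (q.ρ g₁) * (x₂ : G ⧸ N) * (q.s (q.ρ g₁))⁻¹ ∈ S φ q :=
      (inferInstance : (S φ q).Normal).conj_mem _ x₂.2 _
    have key : (⟨QuotientGroup.mk (g₁ * g₂) * (q.s (q.ρ (g₁ * g₂)))⁻¹,
        mem_S φ q (g₁ * g₂)⟩ : S φ q)
        = x₁ * ⟨q.s (q.ρ g₁) * (x₂ : G ⧸ N) * (q.s (q.ρ g₁))⁻¹, hc⟩ := by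
      apply Subtype.ext
      show _ = (x₁ : G ⧸ N) * _
      simp only [x₁, x₂, map_mul, QuotientGroup.mk_mul]
      group
    apply SemidirectProduct.ext
    · show q.φiso _ = (q.φiso x₁) * φ (q.ρ g₁) (q.φiso x₂)
      rw [key, map_mul, q.φiso_equiv]
    · show q.ρ (g₁ * g₂) = q.ρ g₁ * q.ρ g₂
      simp

lemma Bfun_left (q : SurjQuad G H Γ φ N) (g : G) :
    (Bfun φ q g).left = q.φiso ⟨QuotientGroup.mk g * (q.s (q.ρ g))⁻¹, mem_S φ q g⟩ := rfl

lemma Bfun_right (q : SurjQuad G H Γ φ N) (g : G) : (Bfun φ q g).right = q.ρ g := rfl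

lemma Bfun_surj (q : SurjQuad G H Γ φ N) : Function.Surjective (Bfun φ q) := by
  rintro ⟨h, γ⟩
  obtain ⟨x, hx⟩ := q.φiso.surjective h
  obtain ⟨k, hk, hkx⟩ := Subgroup.mem_map.1 x.2
  obtain ⟨g', hg'⟩ := QuotientGroup.mk'_surjective N (q.s γ)
  have hρg' : q.ρ g' = γ := q.s_sec γ g' hg'
  have hρ : q.ρ (k * g') = γ := by
    simp [map_mul, MonoidHom.mem_ker.1 hk, hρg']
  refine ⟨k * g', ?_⟩
  apply SemidirectProduct.ext
  · show q.φiso _ = h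
    rw [← hx]
    congr 1
    apply Subtype.ext
    show QuotientGroup.mk (k * g') * (q.s (q.ρ (k * g')))⁻¹ = (x : G ⧸ N)
    rw [hρ, ← hg', ← hkx]
    simp
  · exact hρ

lemma ker_Bfun (q : SurjQuad G H Γ φ N) : (Bfun φ q).ker = N := by
  ext g
  rw [MonoidHom.mem_ker]
  constructor
  · intro hg
    have hr : q.ρ g = 1 := by
      have := congrArg SemidirectProduct.right hg; simpa [Bfun_right] using this
    have hl : q.φiso ⟨QuotientGroup.mk g * (q.s (q.ρ g))⁻¹, mem_S φ q g⟩ = 1 := by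
      have := congrArg SemidirectProduct.left hg; simpa [Bfun_left] using this
    have h1 : (⟨QuotientGroup.mk g * (q.s (q.ρ g))⁻¹, mem_S φ q g⟩ : S φ q) = 1 :=
      q.φiso.injective (by rw [hl, map_one])
    have hv : QuotientGroup.mk g * (q.s (q.ρ g))⁻¹ = (1 : G ⧸ N) :=
      congrArg Subtype.val h1
    rw [hr, map_one, inv_one, mul_one] at hv
    exact (QuotientGroup.eq_one_iff g).1 hv
  · intro hg
    have hr : q.ρ g = 1 := q.N_le hg
    have hv : (⟨QuotientGroup.mk g * (q.s (q.ρ g))⁻¹, mem_S φ q g⟩ : S φ q) = 1 := by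
      apply Subtype.ext
      show QuotientGroup.mk g * (q.s (q.ρ g))⁻¹ = (1 : G ⧸ N)
      rw [hr, map_one, inv_one, mul_one]
      exact (QuotientGroup.eq_one_iff g).2 hg
    apply SemidirectProduct.ext
    · show q.φiso _ = (1 : H ⋊[φ] Γ).left
      rw [hv, map_one]; rfl
    · exact hr

lemma s_of_inr (q : SurjQuad G H Γ φ N) (γ : Γ) (g : G) (h : Bfun φ q g = inr γ) :
    q.s γ = QuotientGroup.mk g := by
  have hr : q.ρ g = γ := by
    have := congrArg SemidirectProduct.right h; simpa [Bfun_right] using this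
  have hl : q.φiso ⟨QuotientGroup.mk g * (q.s (q.ρ g))⁻¹, mem_S φ q g⟩ = 1 := by
    have := congrArg SemidirectProduct.left h; simpa [Bfun_left] using this
  have h1 : (⟨QuotientGroup.mk g * (q.s (q.ρ g))⁻¹, mem_S φ q g⟩ : S φ q) = 1 :=
    q.φiso.injective (by rw [hl, map_one])
  have hv : QuotientGroup.mk g * (q.s (q.ρ g))⁻¹ = (1 : G ⧸ N) :=
    congrArg Subtype.val h1
  rw [hr] at hv
  exact (eq_of_mul_inv_eq_one hv).symm

lemma phiiso_mk (q : SurjQuad G H Γ φ N) (g : G)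
    (h : (QuotientGroup.mk g : G ⧸ N) ∈ S φ q) :
    q.φiso ⟨QuotientGroup.mk g, h⟩ = (Bfun φ q g).left := by
  have hρ : q.ρ g = 1 := by
    obtain ⟨k, hk, hkg⟩ := Subgroup.mem_map.1 h
    obtain ⟨n, hn, rfl⟩ := (QuotientGroup.mk'_eq_mk' N).1 hkg
    rw [map_mul, MonoidHom.mem_ker.1 hk, one_mul]
    exact q.N_le hn
  rw [Bfun_left]
  congr 1
  apply Subtype.ext
  show (QuotientGroup.mk g : G ⧸ N) = QuotientGroup.mk g * (q.s (q.ρ g))⁻¹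
  rw [hρ, map_one, inv_one, mul_one]

variable {G H Γ : Type*} [Group G] [Group H] [Group Γ] (φ : Γ →* MulAut H)
variable (ψ : G →* H ⋊[φ] Γ) (hψ : Function.Surjective ψ)

noncomputable def eOf : G ⧸ ψ.ker ≃* H ⋊[φ] Γ :=
  QuotientGroup.quotientKerEquivOfSurjective ψ hψ

lemma eOf_mk (g : G) : eOf φ ψ hψ (QuotientGroup.mk g) = ψ g := rfl

noncomputable def sOf : Γ →* G ⧸ ψ.ker :=
  (eOf φ ψ hψ).symm.toMonoidHom.comp inr

def ρOf : G →* Γ := rightHom.comp ψ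

lemma right_eq_one_of_mem (x : G ⧸ ψ.ker)
    (hx : x ∈ (ρOf φ ψ).ker.map (QuotientGroup.mk' ψ.ker)) :
    (eOf φ ψ hψ x).right = 1 := by
  obtain ⟨k, hk, rfl⟩ := Subgroup.mem_map.1 hx
  have : rightHom (ψ k) = 1 := MonoidHom.mem_ker.1 hk
  simpa [rightHom_eq_right, eOf_mk] using this

lemma eOf_eq_inl_of_mem (x : G ⧸ ψ.ker)
    (hx : x ∈ (ρOf φ ψ).ker.map (QuotientGroup.mk' ψ.ker)) :
    eOf φ ψ hψ x = inl ((eOf φ ψ hψ x).left) := by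
  apply SemidirectProduct.ext
  · simp
  · simp [right_eq_one_of_mem φ ψ hψ x hx]

noncomputable def φisoOf : ((ρOf φ ψ).ker.map (QuotientGroup.mk' ψ.ker)) ≃* H where
  toFun x := (eOf φ ψ hψ (x : G ⧸ ψ.ker)).left
  invFun h := ⟨(eOf φ ψ hψ).symm (inl h), by
    obtain ⟨g, hg⟩ := QuotientGroup.mk'_surjective ψ.ker ((eOf φ ψ hψ).symm (inl h))
    refine Subgroup.mem_map.2 ⟨g, ?_, hg⟩
    have : ψ g = inl h := by
      rw [← eOf_mk φ ψ hψ g]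
      show eOf φ ψ hψ ((QuotientGroup.mk' ψ.ker) g) = inl h
      rw [hg, MulEquiv.apply_symm_apply]
    rw [MonoidHom.mem_ker]
    show rightHom (ψ g) = 1
    rw [this, rightHom_inl]⟩
  left_inv x := by
    apply Subtype.ext
    show (eOf φ ψ hψ).symm (inl ((eOf φ ψ hψ (x : G ⧸ ψ.ker)).left)) = (x : G ⧸ ψ.ker)
    rw [← eOf_eq_inl_of_mem φ ψ hψ _ x.2, MulEquiv.symm_apply_apply]
  right_inv h := by
    show (eOf φ ψ hψ ((eOf φ ψ hψ).symm (inl h))).left = h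
    rw [MulEquiv.apply_symm_apply, left_inl]
  map_mul' x y := by
    show (eOf φ ψ hψ ((x : G ⧸ ψ.ker) * y)).left = _
    rw [map_mul, mul_left, right_eq_one_of_mem φ ψ hψ _ x.2, map_one]
    rfl

noncomputable def quadOf : SurjQuad G H Γ φ ψ.ker where
  ρ := ρOf φ ψ
  ρ_surj := rightHom_surjective.comp hψ
  N_le := fun g hg => by
    have : ψ g = 1 := hg
    rw [MonoidHom.mem_ker]
    show rightHom (ψ g) = 1
    rw [this, map_one]
  s := sOf φ ψ hψ
  s_sec := fun γ g h => by
    have : eOf φ ψ hψ (QuotientGroup.mk g) = inr γ := by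
      rw [h]
      show eOf φ ψ hψ ((eOf φ ψ hψ).symm (inr γ)) = inr γ
      rw [MulEquiv.apply_symm_apply]
    rw [eOf_mk] at this
    show rightHom (ψ g) = γ
    rw [this, rightHom_inr]
  φiso := φisoOf φ ψ hψ
  φiso_equiv := fun γ x h => by
    show (eOf φ ψ hψ _).left = φ γ ((eOf φ ψ hψ (x : G ⧸ ψ.ker)).left)
    have hs : eOf φ ψ hψ (sOf φ ψ hψ γ) = inr γ := by
      show eOf φ ψ hψ ((eOf φ ψ hψ).symm (inr γ)) = inr γ
      rw [MulEquiv.apply_symm_apply]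
    rw [map_mul, map_mul, map_inv, hs, eOf_eq_inl_of_mem φ ψ hψ _ x.2, ← map_inv, ← inl_aut, left_inl, left_inl]


lemma eOf_sOf (γ : Γ) : eOf φ ψ hψ (sOf φ ψ hψ γ) = inr γ :=
  (eOf φ ψ hψ).apply_symm_apply (inr γ)

variable (G H Γ)

def Quads : Type _ := Σ' (N : Subgroup G) (hN : N.Normal), @SurjQuad G H Γ _ _ _ φ N hN

variable {G H Γ}

def Bfull : Quads G H Γ φ → {ψ : G →* H ⋊[φ] Γ // Function.Surjective ψ} :=
  fun q => haveI := q.2.1; ⟨Bfun φ q.2.2, Bfun_surj φ q.2.2⟩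

noncomputable def Ffun : {ψ : G →* H ⋊[φ] Γ // Function.Surjective ψ} → Quads G H Γ φ :=
  fun ψ => ⟨ψ.1.ker, inferInstance, quadOf φ ψ.1 ψ.2⟩

lemma B_Ffun (ψ : {ψ : G →* H ⋊[φ] Γ // Function.Surjective ψ}) :
    Bfull φ (Ffun φ ψ) = ψ := by
  apply Subtype.ext
  apply MonoidHom.ext
  intro g
  show Bfun φ (quadOf φ ψ.1 ψ.2) g = ψ.1 g
  apply SemidirectProduct.ext
  · show (eOf φ ψ.1 ψ.2 (QuotientGroup.mk g * (sOf φ ψ.1 ψ.2 (ρOf φ ψ.1 g))⁻¹)).left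
      = (ψ.1 g).left
    rw [map_mul, map_inv, eOf_mk, eOf_sOf]
    show ((ψ.1 g) * (inr (ρOf φ ψ.1 g))⁻¹).left = (ψ.1 g).left
    rw [← map_inv, mul_left, left_inr, map_one, mul_one]
  · rfl

lemma B_inj : Function.Injective (Bfull (G := G) (H := H) (Γ := Γ) φ) := by
  rintro ⟨N₁, h₁, q₁⟩ ⟨N₂, h₂, q₂⟩ hB
  haveI := h₁; haveI := h₂
  have hfun : ∀ g : G, Bfun φ q₁ g = Bfun φ q₂ g := fun g =>
    DFunLike.congr_fun (congrArg Subtype.val hB) g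
  have hNN : N₁ = N₂ := by
    rw [← ker_Bfun φ q₁, ← ker_Bfun φ q₂]
    ext g
    simp only [MonoidHom.mem_ker, hfun]
  subst hNN
  have hhh : h₁ = h₂ := Subsingleton.elim _ _
  subst hhh
  obtain ⟨ρ₁, hsj₁, hle₁, s₁, sec₁, f₁, eqv₁⟩ := q₁
  obtain ⟨ρ₂, hsj₂, hle₂, s₂, sec₂, f₂, eqv₂⟩ := q₂
  have hρ : ρ₁ = ρ₂ := by
    apply MonoidHom.ext
    intro g
    have := congrArg SemidirectProduct.right (hfun g)
    exact this
  subst hρ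
  have hs : s₁ = s₂ := by
    apply MonoidHom.ext
    intro γ
    obtain ⟨g, hg⟩ := Bfun_surj φ (SurjQuad.mk ρ₁ hsj₁ hle₁ s₁ sec₁ f₁ eqv₁) (inr γ)
    have hg₂ : Bfun φ (SurjQuad.mk ρ₁ hsj₁ hle₂ s₂ sec₂ f₂ eqv₂) g = inr γ := by
      rw [← hfun g, hg]
    rw [s_of_inr φ _ γ g hg, s_of_inr φ _ γ g hg₂]
  subst hs
  have hf : f₁ = f₂ := by
    apply MulEquiv.ext
    rintro ⟨xv, hx⟩
    obtain ⟨k, hk, rfl⟩ := Subgroup.mem_map.1 hx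
    have m1 : (QuotientGroup.mk k : G ⧸ N₁) ∈
        S φ (SurjQuad.mk ρ₁ hsj₁ hle₁ s₁ sec₁ f₁ eqv₁) :=
      Subgroup.mem_map.2 ⟨k, hk, rfl⟩
    have e1 := phiiso_mk φ (SurjQuad.mk ρ₁ hsj₁ hle₁ s₁ sec₁ f₁ eqv₁) k m1
    have e2 := phiiso_mk φ (SurjQuad.mk ρ₁ hsj₂ hle₂ s₁ sec₂ f₂ eqv₂) k m1
    rw [hfun k] at e1
    exact e1.trans e2.symm
  subst hf
  have : sec₁ = sec₂ := rfl
  rfl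

lemma B_bij : Function.Bijective (Bfull (G := G) (H := H) (Γ := Γ) φ) :=
  ⟨B_inj φ, fun ψ => ⟨Ffun φ ψ, B_Ffun φ ψ⟩⟩

end SQAux

/-- For finite groups `G`, `H`, `Γ` with a Γ-action on `H`, there is a bijection
between surjections `ψ : G → H ⋊ Γ` and quadruples `(ρ, N, s, φiso)` as above
(with `N` ranging over normal subgroups of `G`); the bijection sends `ψ` to the
quadruple with `N = ker ψ`, `ρ` the composition of `ψ` with the projection to
`Γ`, `s` determined by `s γ = ⟦g⟧` whenever `ψ g = (1,γ)`, and `φiso`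
determined by `φiso ⟦g⟧ = (ψ g).left` for `g` with `⟦g⟧ ∈ (ker ρ)/N`. -/
theorem stmt_9 {G H Γ : Type*} [Group G] [Group H] [Group Γ]
    [Finite G] [Finite H] [Finite Γ] (φ : Γ →* MulAut H) :
    ∃ F : {ψ : G →* H ⋊[φ] Γ // Function.Surjective ψ} ≃
        (Σ' (N : Subgroup G) (hN : N.Normal), @SurjQuad G H Γ _ _ _ φ N hN),
      ∀ ψ : {ψ : G →* H ⋊[φ] Γ // Function.Surjective ψ},
        haveI : ((F ψ).1).Normal := (F ψ).2.1
        (F ψ).1 = (ψ : G →* H ⋊[φ] Γ).ker ∧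
        (F ψ).2.2.ρ = (rightHom : H ⋊[φ] Γ →* Γ).comp ψ.1 ∧
        (∀ (γ : Γ) (g : G), ψ.1 g = inr γ →
          (F ψ).2.2.s γ = (QuotientGroup.mk g : G ⧸ (F ψ).1)) ∧
        (∀ (g : G) (h : (QuotientGroup.mk g : G ⧸ (F ψ).1) ∈
            ((F ψ).2.2.ρ.ker.map (@QuotientGroup.mk' G _ (F ψ).1 (F ψ).2.1))),
          (F ψ).2.2.φiso ⟨QuotientGroup.mk g, h⟩ = (ψ.1 g).left) := by
  refine ⟨(Equiv.ofBijective (SQAux.Bfull (G := G) (H := H) (Γ := Γ) φ)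
      (SQAux.B_bij φ)).symm, fun ψ => ?_⟩
  set F := (Equiv.ofBijective (SQAux.Bfull (G := G) (H := H) (Γ := Γ) φ)
      (SQAux.B_bij φ)).symm with hFdef
  haveI : ((F ψ).1).Normal := (F ψ).2.1
  have hq : SQAux.Bfull φ (F ψ) = ψ :=
    (Equiv.ofBijective (SQAux.Bfull (G := G) (H := H) (Γ := Γ) φ)
      (SQAux.B_bij φ)).apply_symm_apply ψ
  have hfun : SQAux.Bfun φ (F ψ).2.2 = ψ.1 := congrArg Subtype.val hq
  refine ⟨?_, ?_, ?_, ?_⟩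
  · rw [← hfun]
    exact (SQAux.ker_Bfun φ (F ψ).2.2).symm
  · apply MonoidHom.ext
    intro g
    rw [← hfun]
    rfl
  · intro γ g hg
    exact SQAux.s_of_inr φ (F ψ).2.2 γ g (by rw [hfun]; exact hg)
  · intro g h
    refine (SQAux.phiiso_mk φ (F ψ).2.2 g h).trans ?_
    rw [hfun]
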